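/- arXiv:1210.0473 — 3 statements merged into one kernel-verified Lean document; each statement's English description precedes it below -/
import Mathlib

section
/- Let G be a simple graph on k vertices and A_G = I + L_G. Then for every pair of distinct vertices i, j, (A_G^{-1})_{i,i} ≥ (A_G^{-1})_{i,j}. -/
open Matrix Finset

lemma lap_mulVec_eq_sum (k : ℕ) (G : SimpleGraph (Fin k)) [DecidableRel G.Adj]
    (x : Fin k → ℝ) (v : Fin k) :
    (G.lapMatrix ℝ *ᵥ x) v = ∑ u ∈ G.neighborFinset v, (x v - x u) := by
  rw [SimpleGraph.lapMatrix_mulVec_apply, Finset.sum_sub_distrib, Finset.sum_const,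
    SimpleGraph.card_neighborFinset_eq_degree]
  ring

/-- For `A_G = I + L_G`, diagonal entries of `A_G⁻¹` dominate off-diagonal ones:
`(A_G⁻¹) i j ≤ (A_G⁻¹) i i` for all `i ≠ j`. -/
theorem stmt_7 (k : ℕ) (G : SimpleGraph (Fin k)) [DecidableRel G.Adj] (i j : Fin k)
    (hij : i ≠ j) :
    ((1 : Matrix (Fin k) (Fin k) ℝ) + G.lapMatrix ℝ)⁻¹ i j ≤
      ((1 : Matrix (Fin k) (Fin k) ℝ) + G.lapMatrix ℝ)⁻¹ i i := by
  set A : Matrix (Fin k) (Fin k) ℝ := 1 + G.lapMatrix ℝ with hA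
  have hne : Nonempty (Fin k) := ⟨i⟩
  have hPD : A.PosDef := Matrix.PosDef.add_posSemidef Matrix.PosDef.one (SimpleGraph.posSemidef_lapMatrix ℝ G)
  have hUnit : IsUnit A := hPD.isUnit
  have hsymm : Aᵀ = A := by
    rw [hA, transpose_add, transpose_one, (SimpleGraph.isSymm_lapMatrix (G := G) (R := ℝ)).eq]
  have hinvsymm : (A⁻¹)ᵀ = A⁻¹ := by
    rw [transpose_nonsing_inv, hsymm]
  -- work with the i-th column of A⁻¹
  set x : Fin k → ℝ := fun n => A⁻¹ n i with hx
  have hAx : A *ᵥ x = Pi.single i 1 := by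
    have : x = A⁻¹ *ᵥ Pi.single i 1 := by
      funext n
      simp [hx, mulVec_single]
    rw [this, mulVec_mulVec, mul_nonsing_inv _ (isUnit_iff_isUnit_det A |>.mp hUnit),
      one_mulVec]
  have hAxm : ∀ m : Fin k, x m + ∑ u ∈ G.neighborFinset m, (x m - x u) = (Pi.single i 1 : Fin k → ℝ) m := by
    intro m
    have := congrFun hAx m
    rwa [hA, add_mulVec, one_mulVec, Pi.add_apply, lap_mulVec_eq_sum] at this
  -- goal becomes x j ≤ x i
  have hgoal : A⁻¹ i j = x j := by
    have h := congrFun (congrFun hinvsymm j) i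
    rw [transpose_apply] at h
    simp only [hx]
    exact h
  rw [hgoal]
  show x j ≤ x i
  by_contra hcon
  push_neg at hcon
  -- max index m
  obtain ⟨m, -, hm⟩ := Finset.exists_max_image Finset.univ x ⟨i, Finset.mem_univ i⟩
  have hm' : ∀ n, x n ≤ x m := fun n => hm n (Finset.mem_univ n)
  have hxi_lt : x i < x m := lt_of_lt_of_le hcon (hm' j)
  have hmi : m ≠ i := fun h => by rw [h] at hxi_lt; exact lt_irrefl _ hxi_lt
  have hxm_le : x m ≤ 0 := by
    have h0 := hAxm m
    rw [Pi.single_eq_of_ne hmi] at h0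
    have hsum : 0 ≤ ∑ u ∈ G.neighborFinset m, (x m - x u) :=
      Finset.sum_nonneg fun u _ => sub_nonneg.mpr (hm' u)
    linarith
  -- min index p
  obtain ⟨p, -, hp⟩ := Finset.exists_min_image Finset.univ x ⟨i, Finset.mem_univ i⟩
  have hp' : ∀ n, x n ≤ x n := fun n => le_refl _
  have hpmin : ∀ n, x p ≤ x n := fun n => hp n (Finset.mem_univ n)
  have hxp_neg : x p < 0 := lt_of_le_of_lt (hpmin i) (lt_of_lt_of_le hcon ((hm' j).trans hxm_le))
  have hsump : ∑ u ∈ G.neighborFinset p, (x p - x u) ≤ 0 :=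
    Finset.sum_nonpos fun u _ => sub_nonpos.mpr (hpmin u)
  by_cases hpi : p = i
  · have h1 := hAxm p
    rw [hpi, Pi.single_eq_same] at h1
    rw [← hpi] at h1
    linarith
  · have h0 := hAxm p
    rw [Pi.single_eq_of_ne hpi] at h0
    linarith
end

section
/- Let G be a simple graph on k vertices, A_G = I + L_G, and let G' be the augmented graph (G plus a dummy vertex adjacent to all vertices). Then for all i,j in {1,...,k}, the Moore–Penrose pseudoinverse of L_{G'} satisfies (L_{G'}^+)_{i,j} = (A_G^{-1})_{i,j} − (k+2)/(k+1)^2. -/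
open Matrix

/-- `B` is the Moore–Penrose pseudoinverse of `A`. -/
def IsMoorePenrose {n : Type*} [Fintype n] (A B : Matrix n n ℝ) : Prop :=
  A * B * A = A ∧ B * A * B = B ∧ (A * B)ᵀ = A * B ∧ (B * A)ᵀ = B * A

/-- The augmented graph: `G` plus a dummy (last) vertex adjacent to every vertex of `G`. -/
def augment {k : ℕ} (G : SimpleGraph (Fin k)) : SimpleGraph (Fin (k + 1)) where
  Adj a b :=
    (∃ i j : Fin k, a = i.castSucc ∧ b = j.castSucc ∧ G.Adj i j) ∨
      (a = Fin.last k ∧ b ≠ Fin.last k) ∨ (b = Fin.last k ∧ a ≠ Fin.last k)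
  symm := ⟨by
    rintro a b (⟨i, j, ha, hb, hadj⟩ | h | h)
    · exact Or.inl ⟨j, i, hb, ha, hadj.symm⟩
    · exact Or.inr (Or.inr h)
    · exact Or.inr (Or.inl h)⟩
  loopless := ⟨by
    rintro a (⟨i, j, ha, hb, hadj⟩ | h | h)
    · exact G.loopless.irrefl i (by
        have : i = j := Fin.castSucc_injective k (ha ▸ hb ▸ rfl)
        exact this ▸ hadj)
    · exact h.2 h.1
    · exact h.2 h.1⟩

noncomputable instance {k : ℕ} (G : SimpleGraph (Fin k)) : DecidableRel (augment G).Adj :=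
  Classical.decRel _

set_option linter.unusedSectionVars false

variable {k : ℕ} (G : SimpleGraph (Fin k)) [DecidableRel G.Adj]

lemma augment_adj_cast_cast (i j : Fin k) :
    (augment G).Adj i.castSucc j.castSucc ↔ G.Adj i j := by
  constructor
  · rintro (⟨a, b, ha, hb, h⟩ | ⟨h, _⟩ | ⟨h, _⟩)
    · rwa [Fin.castSucc_injective k ha, Fin.castSucc_injective k hb]
    · exact absurd h (Fin.castSucc_lt_last i).ne
    · exact absurd h (Fin.castSucc_lt_last j).ne
  · exact fun h => Or.inl ⟨i, j, rfl, rfl, h⟩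

lemma augment_adj_cast_last (i : Fin k) : (augment G).Adj i.castSucc (Fin.last k) :=
  Or.inr (Or.inr ⟨rfl, (Fin.castSucc_lt_last i).ne⟩)

lemma augment_adj_last_cast (j : Fin k) : (augment G).Adj (Fin.last k) j.castSucc :=
  ((augment G).adj_symm (augment_adj_cast_last G j))

-- degrees
lemma augment_degree_last : (augment G).degree (Fin.last k) = k := by
  rw [SimpleGraph.degree]
  have : (augment G).neighborFinset (Fin.last k) = Finset.univ.filter (· ≠ Fin.last k) := by
    ext b
    simp only [SimpleGraph.mem_neighborFinset, Finset.mem_filter, Finset.mem_univ, true_and]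
    constructor
    · rintro (⟨a, c, ha, hb, h⟩ | ⟨_, h⟩ | ⟨h, hne⟩)
      · exact absurd ha (Fin.castSucc_lt_last a).ne'
      · exact h
      · exact absurd rfl hne
    · intro hb
      exact Or.inr (Or.inl ⟨rfl, hb⟩)
  rw [this]
  rw [Finset.filter_ne' Finset.univ (Fin.last k)]
  simp [Finset.card_erase_of_mem]

lemma augment_degree_cast (i : Fin k) :
    (augment G).degree i.castSucc = G.degree i + 1 := by
  classical
  rw [SimpleGraph.degree, SimpleGraph.degree, SimpleGraph.neighborFinset_eq_filter,
    SimpleGraph.neighborFinset_eq_filter, Finset.card_filter, Finset.card_filter,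
    Fin.sum_univ_castSucc]
  simp only [augment_adj_cast_cast, if_pos (augment_adj_cast_last G i)]

lemma augment_lap_cast_cast (i j : Fin k) :
    (augment G).lapMatrix ℝ i.castSucc j.castSucc = (1 + G.lapMatrix ℝ) i j := by
  rcases eq_or_ne i j with rfl | hne
  · simp [SimpleGraph.lapMatrix, SimpleGraph.degMatrix, Matrix.sub_apply, Matrix.add_apply,
      Matrix.diagonal_apply_eq, Matrix.one_apply_eq, SimpleGraph.adjMatrix_apply,
      augment_degree_cast, augment_adj_cast_cast]
    ring
  · have h2 : i.castSucc ≠ j.castSucc := fun h => hne (Fin.castSucc_injective k h)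
    simp [SimpleGraph.lapMatrix, SimpleGraph.degMatrix, Matrix.sub_apply, Matrix.add_apply,
      Matrix.diagonal_apply_ne _ h2, Matrix.diagonal_apply_ne _ hne, Matrix.one_apply_ne hne,
      SimpleGraph.adjMatrix_apply, augment_adj_cast_cast]

lemma augment_lap_cast_last (i : Fin k) :
    (augment G).lapMatrix ℝ i.castSucc (Fin.last k) = -1 := by
  have h2 : i.castSucc ≠ Fin.last k := (Fin.castSucc_lt_last i).ne
  simp [SimpleGraph.lapMatrix, SimpleGraph.degMatrix, Matrix.sub_apply,
    Matrix.diagonal_apply_ne _ h2, SimpleGraph.adjMatrix_apply, augment_adj_cast_last G i]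

lemma augment_lap_last_cast (j : Fin k) :
    (augment G).lapMatrix ℝ (Fin.last k) j.castSucc = -1 := by
  have h2 : Fin.last k ≠ j.castSucc := (Fin.castSucc_lt_last j).ne'
  simp [SimpleGraph.lapMatrix, SimpleGraph.degMatrix, Matrix.sub_apply,
    Matrix.diagonal_apply_ne _ h2, SimpleGraph.adjMatrix_apply, augment_adj_last_cast G j]

lemma augment_lap_last_last :
    (augment G).lapMatrix ℝ (Fin.last k) (Fin.last k) = k := by
  simp [SimpleGraph.lapMatrix, SimpleGraph.degMatrix, Matrix.sub_apply,
    Matrix.diagonal_apply_eq, SimpleGraph.adjMatrix_apply, augment_degree_last]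

lemma Amat_posDef : ((1 : Matrix (Fin k) (Fin k) ℝ) + G.lapMatrix ℝ).PosDef :=
  Matrix.PosDef.one.add_posSemidef (G.posSemidef_lapMatrix ℝ)

lemma Amat_det_isUnit : IsUnit ((1 : Matrix (Fin k) (Fin k) ℝ) + G.lapMatrix ℝ).det :=
  isUnit_iff_ne_zero.mpr (ne_of_gt (Amat_posDef G).det_pos)

lemma rowsum_lap (i : Fin k) : ∑ j, G.lapMatrix ℝ i j = 0 := by
  have h := congrFun (G.lapMatrix_mulVec_const_eq_zero (R := ℝ)) i
  simpa [Matrix.mulVec, dotProduct] using h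

lemma rowsum_A (i : Fin k) : ∑ j, ((1 : Matrix (Fin k) (Fin k) ℝ) + G.lapMatrix ℝ) i j = 1 := by
  simp [Matrix.add_apply, Finset.sum_add_distrib, rowsum_lap, Matrix.one_apply]

lemma Asymm : ((1 : Matrix (Fin k) (Fin k) ℝ) + G.lapMatrix ℝ)ᵀ = 1 + G.lapMatrix ℝ := by
  rw [Matrix.transpose_add, Matrix.transpose_one, G.isSymm_lapMatrix (R := ℝ)]

lemma Ainv_symm : ((1 : Matrix (Fin k) (Fin k) ℝ) + G.lapMatrix ℝ)⁻¹ᵀ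
    = ((1 : Matrix (Fin k) (Fin k) ℝ) + G.lapMatrix ℝ)⁻¹ := by
  rw [Matrix.transpose_nonsing_inv, Asymm]

lemma rowsum_Ainv (i : Fin k) :
    ∑ j, ((1 : Matrix (Fin k) (Fin k) ℝ) + G.lapMatrix ℝ)⁻¹ i j = 1 := by
  set A := (1 : Matrix (Fin k) (Fin k) ℝ) + G.lapMatrix ℝ with hA
  have hmul := Matrix.nonsing_inv_mul A (Amat_det_isUnit G)
  calc ∑ j, A⁻¹ i j = ∑ j, A⁻¹ i j * (∑ l, A j l) := by
        simp only [rowsum_A, hA, mul_one]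
    _ = ∑ l, (A⁻¹ * A) i l := by
        simp only [Matrix.mul_apply, Finset.mul_sum]
        rw [Finset.sum_comm]
    _ = 1 := by simp [hmul, Matrix.one_apply]

lemma colsum_Ainv (j : Fin k) :
    ∑ m, ((1 : Matrix (Fin k) (Fin k) ℝ) + G.lapMatrix ℝ)⁻¹ m j = 1 := by
  have h : ∀ m, ((1 : Matrix (Fin k) (Fin k) ℝ) + G.lapMatrix ℝ)⁻¹ m j
      = ((1 : Matrix (Fin k) (Fin k) ℝ) + G.lapMatrix ℝ)⁻¹ j m := by
    intro m
    conv_lhs => rw [← Ainv_symm G]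
    rfl
  simp only [h]
  exact rowsum_Ainv G j

lemma mulAAinv (i j : Fin k) :
    ∑ m, ((1 : Matrix (Fin k) (Fin k) ℝ) + G.lapMatrix ℝ) i m *
      ((1 : Matrix (Fin k) (Fin k) ℝ) + G.lapMatrix ℝ)⁻¹ m j = if i = j then 1 else 0 := by
  have h := congrFun (congrFun (Matrix.mul_nonsing_inv _ (Amat_det_isUnit G)) i) j
  simpa [Matrix.mul_apply, Matrix.one_apply] using h

variable (k) in
noncomputable def Bmat : Matrix (Fin (k + 1)) (Fin (k + 1)) ℝ :=
  Matrix.of fun x y =>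
    Fin.lastCases
      (Fin.lastCases ((k : ℝ) / ((k : ℝ) + 1) ^ 2) (fun _ => -1 / ((k : ℝ) + 1) ^ 2) y)
      (fun i => Fin.lastCases (-1 / ((k : ℝ) + 1) ^ 2)
        (fun j => ((1 : Matrix (Fin k) (Fin k) ℝ) + G.lapMatrix ℝ)⁻¹ i j
          - ((k : ℝ) + 2) / ((k : ℝ) + 1) ^ 2) y)
      x

@[simp] lemma Bmat_cast_cast (i j : Fin k) :
    Bmat k G i.castSucc j.castSucc = ((1 : Matrix (Fin k) (Fin k) ℝ) + G.lapMatrix ℝ)⁻¹ i j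
      - ((k : ℝ) + 2) / ((k : ℝ) + 1) ^ 2 := by
  simp [Bmat]

@[simp] lemma Bmat_cast_last (i : Fin k) :
    Bmat k G i.castSucc (Fin.last k) = -1 / ((k : ℝ) + 1) ^ 2 := by
  simp [Bmat]

@[simp] lemma Bmat_last_cast (j : Fin k) :
    Bmat k G (Fin.last k) j.castSucc = -1 / ((k : ℝ) + 1) ^ 2 := by
  simp [Bmat]

@[simp] lemma Bmat_last_last :
    Bmat k G (Fin.last k) (Fin.last k) = (k : ℝ) / ((k : ℝ) + 1) ^ 2 := by
  simp [Bmat]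

lemma Bmat_symm : (Bmat k G)ᵀ = Bmat k G := by
  ext x y
  rw [Matrix.transpose_apply]
  induction x using Fin.lastCases with
  | last =>
    induction y using Fin.lastCases with
    | last => rfl
    | cast j => simp
  | cast i =>
    induction y using Fin.lastCases with
    | last => simp
    | cast j =>
      simp only [Bmat_cast_cast]
      conv_lhs => rw [← Ainv_symm G]
      rfl

lemma hk1 : ((k : ℝ) + 1) ≠ 0 := by positivity

lemma mul_lap_Bmat : (augment G).lapMatrix ℝ * Bmat k G
    = 1 - ((k : ℝ) + 1)⁻¹ • Matrix.of (fun _ _ => (1 : ℝ)) := by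
  have hk : ((k : ℝ) + 1) ≠ 0 := hk1
  ext x y
  rw [Matrix.mul_apply, Matrix.sub_apply, Matrix.smul_apply, Matrix.of_apply, smul_eq_mul,
    mul_one]
  induction x using Fin.lastCases with
  | last =>
    induction y using Fin.lastCases with
    | last =>
      rw [Fin.sum_univ_castSucc]
      simp only [augment_lap_last_cast, augment_lap_last_last, Bmat_cast_last, Bmat_last_last,
        Matrix.one_apply_eq]
      rw [Finset.sum_const, Finset.card_univ, Fintype.card_fin, nsmul_eq_mul]
      field_simp
      ring
    | cast j =>
      rw [Fin.sum_univ_castSucc]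
      simp only [augment_lap_last_cast, augment_lap_last_last, Bmat_cast_cast, Bmat_last_cast]
      have hone : (1 : Matrix (Fin (k+1)) (Fin (k+1)) ℝ) (Fin.last k) j.castSucc = 0 :=
        Matrix.one_apply_ne (Fin.castSucc_lt_last j).ne'
      rw [hone]
      have : ∑ m : Fin k, -1 * (((1 : Matrix (Fin k) (Fin k) ℝ) + G.lapMatrix ℝ)⁻¹ m j
          - ((k : ℝ) + 2) / ((k : ℝ) + 1) ^ 2)
          = -1 * ((∑ m, ((1 : Matrix (Fin k) (Fin k) ℝ) + G.lapMatrix ℝ)⁻¹ m j)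
            - (k : ℝ) * (((k : ℝ) + 2) / ((k : ℝ) + 1) ^ 2)) := by
        rw [← Finset.mul_sum, Finset.sum_sub_distrib, Finset.sum_const, Finset.card_univ,
          Fintype.card_fin, nsmul_eq_mul]
      rw [this, colsum_Ainv]
      field_simp
      ring
  | cast i =>
    induction y using Fin.lastCases with
    | last =>
      rw [Fin.sum_univ_castSucc]
      simp only [augment_lap_cast_cast, augment_lap_cast_last, Bmat_cast_last, Bmat_last_last]
      have hone : (1 : Matrix (Fin (k+1)) (Fin (k+1)) ℝ) i.castSucc (Fin.last k) = 0 :=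
        Matrix.one_apply_ne (Fin.castSucc_lt_last i).ne
      rw [hone]
      rw [← Finset.sum_mul, rowsum_A]
      field_simp
      ring
    | cast j =>
      rw [Fin.sum_univ_castSucc]
      simp only [augment_lap_cast_cast, augment_lap_cast_last, Bmat_cast_cast, Bmat_last_cast]
      have key : ∑ m : Fin k, ((1 : Matrix (Fin k) (Fin k) ℝ) + G.lapMatrix ℝ) i m *
          (((1 : Matrix (Fin k) (Fin k) ℝ) + G.lapMatrix ℝ)⁻¹ m j
            - ((k : ℝ) + 2) / ((k : ℝ) + 1) ^ 2)
          = (if i = j then 1 else 0)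
            - ((k : ℝ) + 2) / ((k : ℝ) + 1) ^ 2 := by
        simp only [mul_sub, Finset.sum_sub_distrib, ← Finset.sum_mul, mulAAinv G i j,
          rowsum_A, one_mul]
      rw [key]
      have hone : (1 : Matrix (Fin (k+1)) (Fin (k+1)) ℝ) i.castSucc j.castSucc
          = if i = j then 1 else 0 := by
        rw [Matrix.one_apply]
        simp [Fin.castSucc_inj]
      rw [hone]
      rcases eq_or_ne i j with rfl | hne
      · simp only [if_pos rfl]
        field_simp
        ring
      · simp only [if_neg hne]
        field_simp
        ring

lemma mp_unique {n : Type*} [Fintype n] (A B C : Matrix n n ℝ)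
    (hB : IsMoorePenrose A B) (hC : IsMoorePenrose A C) : B = C := by
  obtain ⟨hB1, hB2, hB3, hB4⟩ := hB
  obtain ⟨hC1, hC2, hC3, hC4⟩ := hC
  have hAB : A * B = A * C := by
    calc A * B = (A * C * A) * B := by rw [hC1]
      _ = (A * C) * (A * B) := by rw [Matrix.mul_assoc (A * C) A B]
      _ = (A * C)ᵀ * (A * B)ᵀ := by rw [hC3, hB3]
      _ = ((A * B) * (A * C))ᵀ := by simp only [Matrix.transpose_mul, Matrix.mul_assoc]
      _ = ((A * B * A) * C)ᵀ := by rw [Matrix.mul_assoc (A * B) A C]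
      _ = (A * C)ᵀ := by rw [hB1]
      _ = A * C := hC3
  have hBA : B * A = C * A := by
    calc B * A = B * (A * C * A) := by rw [hC1]
      _ = (B * (A * C)) * A := by rw [Matrix.mul_assoc B (A * C) A]
      _ = (B * A) * (C * A) := by rw [← Matrix.mul_assoc B A C, Matrix.mul_assoc (B * A) C A]
      _ = (B * A)ᵀ * (C * A)ᵀ := by rw [hB4, hC4]
      _ = ((C * A) * (B * A))ᵀ := by simp only [Matrix.transpose_mul, Matrix.mul_assoc]
      _ = ((C * (A * B)) * A)ᵀ := by simp only [Matrix.mul_assoc]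
      _ = (C * A)ᵀ := by rw [Matrix.mul_assoc C (A * B) A, hB1]
      _ = C * A := hC4
  calc B = B * A * B := hB2.symm
    _ = (C * A) * B := by rw [hBA]
    _ = C * (A * B) := by rw [Matrix.mul_assoc]
    _ = C * (A * C) := by rw [hAB]
    _ = C * A * C := by rw [Matrix.mul_assoc]
    _ = C := hC2

lemma Ssymm : ((1 : Matrix (Fin (k+1)) (Fin (k+1)) ℝ)
    - ((k : ℝ) + 1)⁻¹ • Matrix.of (fun _ _ => (1 : ℝ)))ᵀ
    = 1 - ((k : ℝ) + 1)⁻¹ • Matrix.of (fun _ _ => (1 : ℝ)) := by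
  rw [Matrix.transpose_sub, Matrix.transpose_one, Matrix.transpose_smul]
  rfl

lemma mul_Bmat_lap : Bmat k G * (augment G).lapMatrix ℝ
    = 1 - ((k : ℝ) + 1)⁻¹ • Matrix.of (fun _ _ => (1 : ℝ)) := by
  have h := congrArg Matrix.transpose (mul_lap_Bmat G)
  rw [Matrix.transpose_mul, Bmat_symm, ((augment G).isSymm_lapMatrix (R := ℝ)).eq, Ssymm] at h
  exact h

lemma colsum_auglap (y : Fin (k + 1)) : ∑ z, (augment G).lapMatrix ℝ z y = 0 := by
  have hsym : ∀ z, (augment G).lapMatrix ℝ z y = (augment G).lapMatrix ℝ y z := fun z =>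
    ((augment G).isSymm_lapMatrix (R := ℝ)).apply y z
  simp only [hsym]
  have h := congrFun ((augment G).lapMatrix_mulVec_const_eq_zero (R := ℝ)) y
  simpa [Matrix.mulVec, dotProduct] using h

lemma colsum_Bmat (y : Fin (k + 1)) : ∑ z, Bmat k G z y = 0 := by
  have hk : ((k : ℝ) + 1) ≠ 0 := hk1
  induction y using Fin.lastCases with
  | last =>
    rw [Fin.sum_univ_castSucc]
    simp only [Bmat_cast_last, Bmat_last_last, Finset.sum_const, Finset.card_univ,
      Fintype.card_fin, nsmul_eq_mul]
    field_simp
    ring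
  | cast j =>
    rw [Fin.sum_univ_castSucc]
    simp only [Bmat_cast_cast, Bmat_last_cast, Finset.sum_sub_distrib, Finset.sum_const,
      Finset.card_univ, Fintype.card_fin, nsmul_eq_mul, colsum_Ainv]
    field_simp
    ring

lemma J_mul_lap : (Matrix.of (fun _ _ => (1 : ℝ)) : Matrix (Fin (k+1)) (Fin (k+1)) ℝ)
    * (augment G).lapMatrix ℝ = 0 := by
  ext x y
  rw [Matrix.mul_apply]
  simp only [Matrix.of_apply, one_mul, Matrix.zero_apply]
  exact colsum_auglap G y

lemma J_mul_Bmat : (Matrix.of (fun _ _ => (1 : ℝ)) : Matrix (Fin (k+1)) (Fin (k+1)) ℝ)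
    * Bmat k G = 0 := by
  ext x y
  rw [Matrix.mul_apply]
  simp only [Matrix.of_apply, one_mul, Matrix.zero_apply]
  exact colsum_Bmat G y

lemma Bmat_isMP : IsMoorePenrose ((augment G).lapMatrix ℝ) (Bmat k G) := by
  refine ⟨?_, ?_, ?_, ?_⟩
  · rw [mul_lap_Bmat, Matrix.sub_mul, Matrix.one_mul, Matrix.smul_mul, J_mul_lap, smul_zero,
      sub_zero]
  · rw [mul_Bmat_lap, Matrix.sub_mul, Matrix.one_mul, Matrix.smul_mul, J_mul_Bmat, smul_zero,
      sub_zero]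
  · rw [mul_lap_Bmat]; exact Ssymm
  · rw [mul_Bmat_lap]; exact Ssymm

/-- The top-left `k × k` block of the Moore–Penrose pseudoinverse of the Laplacian of the
augmented graph satisfies `(L_{G'}⁺)_{i,j} = (A_G⁻¹)_{i,j} − (k+2)/(k+1)²`. -/
theorem stmt_13 (k : ℕ) (G : SimpleGraph (Fin k)) [DecidableRel G.Adj]
    (P : Matrix (Fin (k + 1)) (Fin (k + 1)) ℝ)
    (hP : IsMoorePenrose ((augment G).lapMatrix ℝ) P) (i j : Fin k) :
    P i.castSucc j.castSucc =
      ((1 : Matrix (Fin k) (Fin k) ℝ) + G.lapMatrix ℝ)⁻¹ i j -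
        ((k : ℝ) + 2) / ((k : ℝ) + 1) ^ 2 := by
  have hPB : P = Bmat k G := mp_unique _ P (Bmat k G) hP (Bmat_isMP G)
  rw [hPB, Bmat_cast_cast]
end

section
/- Let L be the Laplacian of a connected graph on n vertices with Moore–Penrose pseudoinverse L^+, and define the resistance distance R_{i,j} = (L^+)_{i,i} + (L^+)_{j,j} − 2(L^+)_{i,j}. Then (L^+)_{i,j} = −(1/2)R_{i,j} + (1/(2n))Σ_l R_{i,l} + (1/(2n))Σ_l R_{j,l} − (1/(2n^2))Σ_{l,m} R_{l,m}. -/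
open Matrix Finset

/-- For a connected graph on `n` vertices with Laplacian `L` and pseudoinverse `L⁺`, writing
`R i j = L⁺ i i + L⁺ j j - 2 L⁺ i j` for the resistance distance,
`L⁺ i j = -(1/2) R i j + (1/(2n)) Σ_l R i l + (1/(2n)) Σ_l R j l - (1/(2n²)) Σ_{l,m} R l m`. -/
theorem stmt_14 (n : ℕ) (G : SimpleGraph (Fin n)) [DecidableRel G.Adj]
    (hconn : G.Connected) (P : Matrix (Fin n) (Fin n) ℝ)
    (hP : IsMoorePenrose (G.lapMatrix ℝ) P)
    (R : Matrix (Fin n) (Fin n) ℝ) (hR : ∀ i j, R i j = P i i + P j j - 2 * P i j)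
    (i j : Fin n) :
    P i j =
      -(1 / 2) * R i j + (1 / (2 * n)) * ∑ l, R i l + (1 / (2 * n)) * ∑ l, R j l -
        (1 / (2 * (n : ℝ) ^ 2)) * ∑ l, ∑ m, R l m := by
  obtain ⟨hLPL, hPLP, hLPt, hPLt⟩ := hP
  set L := G.lapMatrix ℝ with hL
  have hLsym : Lᵀ = L := G.isSymm_lapMatrix ℝ
  have hLv : L *ᵥ (fun _ ↦ (1 : ℝ)) = 0 := G.lapMatrix_mulVec_const_eq_zero
  -- row sums of P vanish
  have hrow : P *ᵥ (fun _ ↦ (1 : ℝ)) = 0 := by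
    have hLP : L * P = Pᵀ * L := by rw [← hLPt, transpose_mul, hLsym]
    calc P *ᵥ (fun _ ↦ (1:ℝ)) = (P * (L * P)) *ᵥ (fun _ ↦ (1:ℝ)) := by
          rw [← Matrix.mul_assoc, hPLP]
      _ = (P * Pᵀ) *ᵥ (L *ᵥ (fun _ ↦ (1:ℝ))) := by
          rw [hLP, ← Matrix.mul_assoc, ← mulVec_mulVec]
      _ = 0 := by rw [hLv, mulVec_zero]
  have hcol : Pᵀ *ᵥ (fun _ ↦ (1 : ℝ)) = 0 := by
    have hPL : L * Pᵀ = P * L := by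
      rw [← hPLt, transpose_mul, hLsym]
    calc Pᵀ *ᵥ (fun _ ↦ (1:ℝ)) = (P * L * P)ᵀ *ᵥ (fun _ ↦ (1:ℝ)) := by rw [hPLP]
      _ = (Pᵀ * (L * Pᵀ)) *ᵥ (fun _ ↦ (1:ℝ)) := by
          simp [transpose_mul, hLsym, Matrix.mul_assoc]
      _ = (Pᵀ * P) *ᵥ (L *ᵥ (fun _ ↦ (1:ℝ))) := by
          rw [hPL, ← Matrix.mul_assoc, ← mulVec_mulVec]
      _ = 0 := by rw [hLv, mulVec_zero]
  have h1 : ∀ a, ∑ l, P a l = 0 := fun a => by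
    have := congrFun hrow a
    simpa [mulVec, dotProduct] using this
  have h2 : ∀ a, ∑ l, P l a = 0 := fun a => by
    have := congrFun hcol a
    simpa [mulVec, dotProduct, transpose] using this
  have hn : (0 : ℝ) < n := by
    have : Nonempty (Fin n) := hconn.nonempty
    exact_mod_cast Nat.pos_of_ne_zero (by rintro rfl; exact (not_nonempty_iff.2 inferInstance) this)
  set T := ∑ l, P l l with hT
  have hri : ∀ a, ∑ l, R a l = n * P a a + T := fun a => by
    simp only [hR a]
    rw [Finset.sum_sub_distrib, Finset.sum_add_distrib]
    simp [← Finset.sum_mul, h1 a, Finset.card_univ, mul_comm]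
    exact hT.symm
  have hsum : ∑ l, ∑ m, R l m = 2 * n * T := by
    rw [Finset.sum_congr rfl (fun l _ => hri l), Finset.sum_add_distrib]
    simp only [← Finset.mul_sum, ← hT]
    simp [Finset.card_univ]
    ring
  rw [hR i j, hri i, hri j, hsum]
  have hn' : (n : ℝ) ≠ 0 := ne_of_gt hn
  field_simp
  ring
end
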